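/- Let g : ℕ → ℂ be a bounded sequence in the Wiener space W with spectral measure σ_g, and for each n ≥ 1 let σ_{g,n} be the measure on 𝕋 with density ρ_{g,n}(x) = |n^{−1/2} ∑_{j=0}^{n−1} g(j) e^{ijx}|² with respect to dx/2π. Then for every k ∈ ℤ, σ̂_{g,n}(k) → σ̂_g(k) as n → ∞; in particular the sequence of finite measures (σ_{g,n}) converges weakly to σ_g. Moreover, for k ≥ 0, |(1/n) ∑_{j=0}^{n−1} g(j+k)·conjugate(g(j)) − σ̂_{g,n}(k)| ≤ (k/n)·(sup_j |g(j)|)². -/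

import Mathlib

open MeasureTheory Filter Finset

instance : Fact (0 < 2 * Real.pi) := ⟨by positivity⟩

/-- The Fourier coefficient `σ̂(k) = ∫ e^{-ikx} dσ(x)` of a measure on the circle
`𝕋 = ℝ/2πℤ`. -/
noncomputable def fourierCoeffMeasure (σ : Measure (AddCircle (2 * Real.pi))) (k : ℤ) : ℂ :=
  ∫ x, fourier (-k) x ∂σ

/-- The measure `σ_{g,n}` on the circle with density
`ρ_{g,n}(x) = |n^{-1/2} ∑_{j<n} g(j) e^{ijx}|²` with respect to `dx/2π`. -/
noncomputable def sigmaApprox (g : ℕ → ℂ) (n : ℕ) : Measure (AddCircle (2 * Real.pi)) :=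
  (volume : Measure (AddCircle (2 * Real.pi))).withDensity fun x =>
    ENNReal.ofReal (‖(Real.sqrt n)⁻¹ • ∑ j ∈ Finset.range n, g j * fourier j x‖ ^ 2
      / (2 * Real.pi))

lemma integral_fourier_haar (m : ℤ) :
    ∫ x : AddCircle (2 * Real.pi), fourier m x ∂AddCircle.haarAddCircle
      = if m = 0 then 1 else 0 := by
  split_ifs with h
  · simp [h, fourier_zero]
  · exact integral_eq_zero_of_add_right_eq_neg
      (fourier_add_half_inv_index h (by positivity))

lemma integral_fourier_vol (m : ℤ) :
    ∫ x : AddCircle (2 * Real.pi), fourier m x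
      = if m = 0 then ((2 * Real.pi : ℝ) : ℂ) else 0 := by
  rw [AddCircle.volume_eq_smul_haarAddCircle, integral_smul_measure,
    integral_fourier_haar, ENNReal.toReal_ofReal (by positivity)]
  split_ifs <;> simp [Complex.real_smul]

lemma contS (g : ℕ → ℂ) (n : ℕ) :
    Continuous fun x : AddCircle (2 * Real.pi) => ∑ j ∈ Finset.range n, g j * fourier j x := by
  exact continuous_finset_sum _ fun j _ => continuous_const.mul (fourier j).continuous

lemma key (g : ℕ → ℂ) (n : ℕ) (k : ℤ) :
    fourierCoeffMeasure (sigmaApprox g n) k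
      = (n : ℂ)⁻¹ * ∑ j ∈ Finset.range n, ∑ l ∈ Finset.range n,
          (if (j : ℤ) - l = k then g j * (starRingEnd ℂ) (g l) else 0) := by
  classical
  set S : AddCircle (2 * Real.pi) → ℂ := fun x => ∑ j ∈ Finset.range n, g j * fourier j x
    with hS
  have hScont : Continuous S := contS g n
  set ρ : AddCircle (2 * Real.pi) → ℝ :=
    fun x => ‖(Real.sqrt n)⁻¹ • S x‖ ^ 2 / (2 * Real.pi) with hρ
  have hρcont : Continuous ρ := (hScont.const_smul (Real.sqrt n)⁻¹).norm.pow 2 |>.div_const _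
  have hρ0 : ∀ x, 0 ≤ ρ x := fun x => by positivity
  have hmeas : sigmaApprox g n
      = (volume : Measure (AddCircle (2 * Real.pi))).withDensity
          fun x => ((ρ x).toNNReal : ENNReal) := rfl
  have h1 : fourierCoeffMeasure (sigmaApprox g n) k
      = ∫ x, (fun x => (ρ x).toNNReal) x • fourier (-k) x := by
    rw [fourierCoeffMeasure, hmeas,
      integral_withDensity_eq_integral_smul hρcont.measurable.real_toNNReal]
  have hexp : ∀ x, S x * (starRingEnd ℂ) (S x) * fourier (-k) x
      = ∑ j ∈ Finset.range n, ∑ l ∈ Finset.range n,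
          g j * (starRingEnd ℂ) (g l) * fourier ((j : ℤ) - l - k) x := by
    intro x
    have hconjS : (starRingEnd ℂ) (S x)
        = ∑ l ∈ Finset.range n, (starRingEnd ℂ) (g l) * fourier (-(l : ℤ)) x := by
      rw [hS]
      simp only [map_sum, map_mul, ← fourier_neg]
    rw [hS, hconjS, Finset.sum_mul_sum, Finset.sum_mul]
    refine Finset.sum_congr rfl fun j _ => ?_
    rw [Finset.sum_mul]
    refine Finset.sum_congr rfl fun l _ => ?_
    have : ((j : ℤ) - l - k) = (j : ℤ) + (-(l : ℤ) + -k) := by ring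
    rw [this, fourier_add, fourier_add]
    ring
  have h2 : ∀ x : AddCircle (2 * Real.pi), (ρ x).toNNReal • fourier (-k) x
      = ∑ j ∈ Finset.range n, ∑ l ∈ Finset.range n,
          (n : ℂ)⁻¹ * ((2 * Real.pi : ℝ) : ℂ)⁻¹ *
            (g j * (starRingEnd ℂ) (g l) * fourier ((j : ℤ) - l - k) x) := by
    intro x
    have e1 : (ρ x).toNNReal • fourier (-k) x = (ρ x : ℂ) * fourier (-k) x := by
      rw [NNReal.smul_def, Real.coe_toNNReal _ (hρ0 x), Complex.real_smul]
    have hnorm : ρ x = (n : ℝ)⁻¹ * ‖S x‖ ^ 2 * (2 * Real.pi)⁻¹ := by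
      rw [hρ]
      simp only [norm_smul, norm_inv, Real.norm_eq_abs, abs_of_nonneg (Real.sqrt_nonneg _),
        mul_pow, div_eq_mul_inv]
      rw [← Real.sqrt_inv, Real.sq_sqrt (by positivity)]
    have hSconj : ((‖S x‖ : ℂ)) ^ 2 = S x * (starRingEnd ℂ) (S x) := by
      rw [← Complex.ofReal_pow, ← Complex.normSq_eq_norm_sq, Complex.mul_conj]
    have e2 : (ρ x : ℂ) * fourier (-k) x
        = (n : ℂ)⁻¹ * ((2 * Real.pi : ℝ) : ℂ)⁻¹ *
            (S x * (starRingEnd ℂ) (S x) * fourier (-k) x) := by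
      rw [hnorm]
      push_cast
      rw [← hSconj]
      ring
    rw [e1, e2, hexp, Finset.mul_sum]
    refine Finset.sum_congr rfl fun j _ => ?_
    rw [Finset.mul_sum]
  have hint : ∀ (j l : ℕ), Integrable
      (fun x : AddCircle (2 * Real.pi) =>
        (n : ℂ)⁻¹ * ((2 * Real.pi : ℝ) : ℂ)⁻¹ *
          (g j * (starRingEnd ℂ) (g l) * fourier ((j : ℤ) - l - k) x)) volume := by
    intro j l
    apply Continuous.integrable_of_hasCompactSupport
    · exact continuous_const.mul (continuous_const.mul (fourier _).continuous)
    · exact HasCompactSupport.of_compactSpace _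
  rw [h1]
  simp only [h2]
  rw [integral_finset_sum _ fun j _ => integrable_finset_sum _ fun l _ => hint j l]
  rw [Finset.mul_sum]
  refine Finset.sum_congr rfl fun j _ => ?_
  rw [integral_finset_sum _ fun l _ => hint j l, Finset.mul_sum]
  refine Finset.sum_congr rfl fun l _ => ?_
  rw [integral_const_mul, integral_const_mul, integral_fourier_vol]
  have h2pi : ((2 * Real.pi : ℝ) : ℂ) ≠ 0 := by
    simp only [ne_eq, Complex.ofReal_eq_zero]
    positivity
  have hiff : ((j : ℤ) - l - k = 0) ↔ ((j : ℤ) - l = k) := sub_eq_zero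
  rw [if_congr hiff rfl rfl]
  split_ifs with h
  · have hpi : ((Real.pi : ℂ)) ≠ 0 := by
      simp only [ne_eq, Complex.ofReal_eq_zero]; exact Real.pi_ne_zero
    have h2pi' : (2 * (Real.pi : ℂ)) ≠ 0 := by push_cast at h2pi; exact h2pi
    field_simp
  · simp

lemma coeff_nat (g : ℕ → ℂ) (n k : ℕ) :
    fourierCoeffMeasure (sigmaApprox g n) (k : ℤ)
      = (n : ℂ)⁻¹ * ∑ l ∈ Finset.range (n - k), g (l + k) * (starRingEnd ℂ) (g l) := by
  classical
  rw [key]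
  congr 1
  rw [Finset.sum_comm]
  calc ∑ l ∈ Finset.range n, ∑ j ∈ Finset.range n,
        (if (j : ℤ) - l = (k : ℤ) then g j * (starRingEnd ℂ) (g l) else 0)
      = ∑ l ∈ Finset.range n,
          (if l + k ∈ Finset.range n then g (l + k) * (starRingEnd ℂ) (g l) else 0) := by
        refine Finset.sum_congr rfl fun l _ => ?_
        have hiff : ∀ j : ℕ, ((j : ℤ) - l = (k : ℤ)) ↔ j = l + k := by intro j; omega
        simp only [hiff]
        exact Finset.sum_ite_eq' (Finset.range n) (l + k) fun j => g j * (starRingEnd ℂ) (g l)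
    _ = ∑ l ∈ Finset.range (n - k), g (l + k) * (starRingEnd ℂ) (g l) := by
        rw [← Finset.sum_filter]
        congr 1
        ext l
        simp only [Finset.mem_filter, Finset.mem_range]
        omega

lemma cesaro_bound (g : ℕ → ℂ) (hbd : BddAbove (Set.range fun j => ‖g j‖)) (k n : ℕ) :
    ‖(n : ℂ)⁻¹ * (∑ j ∈ Finset.range n, g (j + k) * (starRingEnd ℂ) (g j))
        - fourierCoeffMeasure (sigmaApprox g n) k‖
      ≤ ((k : ℝ) / n) * (⨆ j, ‖g j‖) ^ 2 := by
  classical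
  set M : ℝ := ⨆ j, ‖g j‖ with hM
  have hMj : ∀ j, ‖g j‖ ≤ M := fun j => le_ciSup hbd j
  have hM0 : 0 ≤ M := (norm_nonneg _).trans (hMj 0)
  rw [coeff_nat, ← mul_sub]
  have hsub : Finset.range (n - k) ⊆ Finset.range n :=
    Finset.range_subset_range.mpr (Nat.sub_le n k)
  rw [← Finset.sum_sdiff_eq_sub hsub]
  have hterm : ∀ j ∈ Finset.range n \ Finset.range (n - k),
      ‖g (j + k) * (starRingEnd ℂ) (g j)‖ ≤ M ^ 2 := by
    intro j _
    rw [norm_mul, RCLike.norm_conj, sq]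
    exact mul_le_mul (hMj _) (hMj _) (norm_nonneg _) hM0
  have hcard : ((Finset.range n \ Finset.range (n - k)).card : ℝ) ≤ (k : ℝ) := by
    rw [Finset.card_sdiff_of_subset hsub, Finset.card_range, Finset.card_range]
    exact_mod_cast (by omega : n - (n - k) ≤ k)
  calc ‖(n : ℂ)⁻¹ * ∑ j ∈ Finset.range n \ Finset.range (n - k),
          g (j + k) * (starRingEnd ℂ) (g j)‖
      = (n : ℝ)⁻¹ * ‖∑ j ∈ Finset.range n \ Finset.range (n - k),
          g (j + k) * (starRingEnd ℂ) (g j)‖ := by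
        rw [norm_mul, norm_inv, Complex.norm_natCast]
    _ ≤ (n : ℝ)⁻¹ * (((Finset.range n \ Finset.range (n - k)).card : ℝ) * M ^ 2) := by
        refine mul_le_mul_of_nonneg_left ?_ (by positivity)
        refine (norm_sum_le _ _).trans ?_
        calc ∑ j ∈ Finset.range n \ Finset.range (n - k),
              ‖g (j + k) * (starRingEnd ℂ) (g j)‖
            ≤ ∑ _j ∈ Finset.range n \ Finset.range (n - k), M ^ 2 :=
              Finset.sum_le_sum hterm
          _ = ((Finset.range n \ Finset.range (n - k)).card : ℝ) * M ^ 2 := by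
              rw [Finset.sum_const, nsmul_eq_mul]
    _ ≤ ((k : ℝ) / n) * M ^ 2 := by
        rw [div_eq_mul_inv, mul_comm ((k:ℝ)) _, mul_assoc]
        exact mul_le_mul_of_nonneg_left
          (mul_le_mul_of_nonneg_right hcard (by positivity)) (by positivity)

lemma conj_coeff (μ : Measure (AddCircle (2 * Real.pi))) (m : ℤ) :
    fourierCoeffMeasure μ (-m) = (starRingEnd ℂ) (fourierCoeffMeasure μ m) := by
  rw [fourierCoeffMeasure, fourierCoeffMeasure, ← integral_conj]
  congr 1
  funext x
  rw [← fourier_neg, neg_neg]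

set_option maxHeartbeats 1000000 in
lemma sigmaApprox_finite (g : ℕ → ℂ) (n : ℕ) : IsFiniteMeasure (sigmaApprox g n) := by
  have hc0 : Continuous fun x : AddCircle (2 * Real.pi) =>
      ∑ j ∈ Finset.range n, g j * fourier j x :=
    continuous_finset_sum _ fun j _ => continuous_const.mul (fourier j).continuous
  have hcont : Continuous fun x : AddCircle (2 * Real.pi) =>
      ‖(Real.sqrt n)⁻¹ • ∑ j ∈ Finset.range n, g j * fourier j x‖ ^ 2 / (2 * Real.pi) :=
    ((hc0.const_smul (Real.sqrt n)⁻¹).norm.pow 2).div_const _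
  obtain ⟨C, hC⟩ := (isCompact_range hcont).bddAbove
  refine ⟨?_⟩
  rw [sigmaApprox, withDensity_apply _ MeasurableSet.univ, setLIntegral_univ]
  calc ∫⁻ x, ENNReal.ofReal (‖(Real.sqrt n)⁻¹ • ∑ j ∈ Finset.range n, g j * fourier j x‖ ^ 2
        / (2 * Real.pi))
      ≤ ∫⁻ _x, ENNReal.ofReal C := lintegral_mono fun x =>
        ENNReal.ofReal_le_ofReal (hC (Set.mem_range_self x))
    _ = ENNReal.ofReal C * volume Set.univ := lintegral_const _
    _ < ⊤ := ENNReal.mul_lt_top ENNReal.ofReal_lt_top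
        (IsCompact.measure_lt_top isCompact_univ)

lemma contMap_integrable {X : Type*} [TopologicalSpace X] [CompactSpace X] [MeasurableSpace X]
    [OpensMeasurableSpace X] (μ : Measure X) [IsFiniteMeasure μ] (f : C(X, ℂ)) :
    Integrable (fun x => f x) μ :=
  f.continuous.integrable_of_hasCompactSupport (HasCompactSupport.of_compactSpace _)

/-- For a bounded sequence `g` in the Wiener space with spectral measure `σ_g`, the
Fourier coefficients of `σ_{g,n}` converge to those of `σ_g` (so `σ_{g,n} → σ_g` weakly),
and `|(1/n) ∑_{j=0}^{n-1} g(j+k) conj(g(j)) − σ̂_{g,n}(k)| ≤ (k/n)(sup_j |g(j)|)²`. -/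
theorem sigmaApprox_converges_to_spectral_measure
    (g : ℕ → ℂ) (hbd : BddAbove (Set.range fun j => ‖g j‖)) (c : ℕ → ℂ)
    (hc : ∀ k : ℕ, Tendsto (fun N : ℕ => (N : ℂ)⁻¹ * ∑ n ∈ Finset.range N,
      g (n + k) * (starRingEnd ℂ) (g n)) atTop (nhds (c k)))
    (σg : Measure (AddCircle (2 * Real.pi))) [IsFiniteMeasure σg]
    (hσg : ∀ k : ℕ, fourierCoeffMeasure σg k = c k) :
    (∀ k : ℤ, Tendsto (fun n : ℕ => fourierCoeffMeasure (sigmaApprox g n) k)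
        atTop (nhds (fourierCoeffMeasure σg k))) ∧
    (∀ φ : C(AddCircle (2 * Real.pi), ℝ),
      Tendsto (fun n : ℕ => ∫ x, φ x ∂(sigmaApprox g n)) atTop (nhds (∫ x, φ x ∂σg))) ∧
    (∀ (k n : ℕ), 0 < n →
      ‖(n : ℂ)⁻¹ * (∑ j ∈ Finset.range n, g (j + k) * (starRingEnd ℂ) (g j))
          - fourierCoeffMeasure (sigmaApprox g n) k‖
        ≤ ((k : ℝ) / n) * (⨆ j, ‖g j‖) ^ 2) := by
  classical
  -- Part 1 for natural k
  have hpos : ∀ k : ℕ, Tendsto (fun n : ℕ => fourierCoeffMeasure (sigmaApprox g n) (k : ℤ))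
      atTop (nhds (c k)) := by
    intro k
    have hdiff : Tendsto (fun n : ℕ =>
        (n : ℂ)⁻¹ * (∑ j ∈ Finset.range n, g (j + k) * (starRingEnd ℂ) (g j))
          - fourierCoeffMeasure (sigmaApprox g n) (k : ℤ)) atTop (nhds 0) := by
      apply squeeze_zero_norm (fun n => cesaro_bound g hbd k n)
      have h1 : Tendsto (fun n : ℕ => ((k : ℝ) / n) * (⨆ j, ‖g j‖) ^ 2) atTop
          (nhds (0 * (⨆ j, ‖g j‖) ^ 2)) :=
        (tendsto_const_div_atTop_nhds_zero_nat (k : ℝ)).mul_const _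
      simpa using h1
    have h2 := (hc k).sub hdiff
    rw [sub_zero] at h2
    exact h2.congr fun n => by ring
  have part1 : ∀ k : ℤ, Tendsto (fun n : ℕ => fourierCoeffMeasure (sigmaApprox g n) k)
      atTop (nhds (fourierCoeffMeasure σg k)) := by
    intro k
    obtain ⟨m, rfl | rfl⟩ := k.eq_nat_or_neg
    · rw [hσg m]; exact hpos m
    · rw [conj_coeff σg m]
      have h := hpos m
      rw [← hσg m] at h
      have h3 := ((RCLike.continuous_conj (K := ℂ)).tendsto _).comp h
      exact h3.congr fun n => (conj_coeff _ m).symm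
  refine ⟨part1, ?_, fun k n _ => cesaro_bound g hbd k n⟩
  -- Part 2
  have hspan : ∀ f : C(AddCircle (2 * Real.pi), ℂ),
      f ∈ Submodule.span ℂ (Set.range (@fourier (2 * Real.pi))) →
      Tendsto (fun n : ℕ => ∫ x, f x ∂(sigmaApprox g n)) atTop (nhds (∫ x, f x ∂σg)) := by
    intro f hf
    induction hf using Submodule.span_induction with
    | mem f hf =>
      obtain ⟨m, rfl⟩ := hf
      have := part1 (-m)
      have e : ∀ μ : Measure (AddCircle (2 * Real.pi)),
          fourierCoeffMeasure μ (-m) = ∫ x, fourier m x ∂μ := by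
        intro μ; rw [fourierCoeffMeasure, neg_neg]
      rw [e σg] at this
      exact this.congr fun n => e (sigmaApprox g n)
    | zero => simpa using tendsto_const_nhds
    | add f₁ f₂ h₁ h₂ ih₁ ih₂ =>
      have key : ∀ (μ : Measure (AddCircle (2 * Real.pi))) (_ : IsFiniteMeasure μ),
          ∫ x, (f₁ + f₂) x ∂μ = (∫ x, f₁ x ∂μ) + ∫ x, f₂ x ∂μ := by
        intro μ hμ
        simp only [ContinuousMap.add_apply]
        exact integral_add (contMap_integrable μ f₁) (contMap_integrable μ f₂)
      have := ih₁.add ih₂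
      rw [← key σg inferInstance] at this
      exact this.congr fun n => (key _ (sigmaApprox_finite g n)).symm
    | smul a f hf ih =>
      have key : ∀ μ : Measure (AddCircle (2 * Real.pi)),
          ∫ x, (a • f) x ∂μ = a • ∫ x, f x ∂μ := by
        intro μ
        simp only [ContinuousMap.smul_apply]
        exact integral_smul a _
      have := ih.const_smul a
      rw [← key σg] at this
      exact this.congr fun n => (key _).symm
  -- mass bound
  have hmass : ∀ n : ℕ, (((sigmaApprox g n) Set.univ).toReal : ℂ)
      = fourierCoeffMeasure (sigmaApprox g n) 0 := by
    intro n
    rw [fourierCoeffMeasure, neg_zero]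
    have : (fun x : AddCircle (2 * Real.pi) => fourier 0 x) = fun _ => (1 : ℂ) :=
      funext fun x => fourier_zero
    rw [this, integral_const, Complex.real_smul, mul_one, measureReal_def]
  have hbound : ∃ C : ℝ, ∀ n : ℕ, ((sigmaApprox g n) Set.univ).toReal ≤ C := by
    have hn : Tendsto (fun n : ℕ => ‖fourierCoeffMeasure (sigmaApprox g n) 0‖) atTop
        (nhds ‖fourierCoeffMeasure σg 0‖) := (part1 0).norm
    obtain ⟨C, hC⟩ := hn.bddAbove_range
    refine ⟨C, fun n => ?_⟩
    have e : ((sigmaApprox g n) Set.univ).toReal = ‖fourierCoeffMeasure (sigmaApprox g n) 0‖ := by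
      rw [← hmass n, Complex.norm_real, Real.norm_eq_abs, abs_of_nonneg ENNReal.toReal_nonneg]
    rw [e]
    exact hC (Set.mem_range_self n)
  -- complex version of part 2
  have hcomplex : ∀ f : C(AddCircle (2 * Real.pi), ℂ),
      Tendsto (fun n : ℕ => ∫ x, f x ∂(sigmaApprox g n)) atTop (nhds (∫ x, f x ∂σg)) := by
    intro f
    rw [Metric.tendsto_atTop]
    intro ε hε
    obtain ⟨C, hCb⟩ := hbound
    have hC0 : 0 ≤ C := le_trans ENNReal.toReal_nonneg (hCb 0)
    set D : ℝ := (σg Set.univ).toReal with hD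
    have hD0 : 0 ≤ D := ENNReal.toReal_nonneg
    set δ : ℝ := ε / (2 * (C + D + 1)) with hδdef
    have hδ : 0 < δ := by positivity
    have hfmem0 : f ∈ (Submodule.span ℂ (Set.range (@fourier (2 * Real.pi)))).topologicalClosure := by
      rw [span_fourier_closure_eq_top]
      trivial
    have hfmem : f ∈ closure ((Submodule.span ℂ (Set.range (@fourier (2 * Real.pi)))) :
        Set C(AddCircle (2 * Real.pi), ℂ)) := hfmem0
    rw [Metric.mem_closure_iff] at hfmem
    obtain ⟨P, hPmem, hPd⟩ := hfmem δ hδ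
    have hPt := hspan P hPmem
    rw [Metric.tendsto_atTop] at hPt
    obtain ⟨N, hN⟩ := hPt (ε / 2) (by positivity)
    refine ⟨N, fun n hn => ?_⟩
    haveI := sigmaApprox_finite g n
    have hfP : ∀ x, ‖f x - P x‖ ≤ δ :=
      fun x => le_of_lt (lt_of_le_of_lt (by
        rw [← dist_eq_norm]; exact ContinuousMap.dist_apply_le_dist x) hPd)
    have int_f : Integrable (fun x => f x) (sigmaApprox g n) := contMap_integrable _ f
    have int_P : Integrable (fun x => P x) (sigmaApprox g n) := contMap_integrable _ P
    have int_f' : Integrable (fun x => f x) σg := contMap_integrable _ f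
    have int_P' : Integrable (fun x => P x) σg := contMap_integrable _ P
    have hsplit : (∫ x, f x ∂(sigmaApprox g n)) - ∫ x, f x ∂σg
        = (∫ x, (f x - P x) ∂(sigmaApprox g n))
          + ((∫ x, P x ∂(sigmaApprox g n)) - ∫ x, P x ∂σg)
          + ∫ x, (P x - f x) ∂σg := by
      rw [integral_sub int_f int_P, integral_sub int_P' int_f']
      ring
    have b1 : ‖∫ x, (f x - P x) ∂(sigmaApprox g n)‖ ≤ δ * C := by
      refine le_trans (norm_integral_le_of_norm_le_const
        (Filter.Eventually.of_forall fun x => hfP x)) ?_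
      exact mul_le_mul_of_nonneg_left (hCb n) hδ.le
    have b3 : ‖∫ x, (P x - f x) ∂σg‖ ≤ δ * D := by
      refine le_trans (norm_integral_le_of_norm_le_const
        (Filter.Eventually.of_forall fun x => by
          rw [norm_sub_rev]; exact hfP x)) ?_
      exact le_of_eq rfl
    have b2 : ‖(∫ x, P x ∂(sigmaApprox g n)) - ∫ x, P x ∂σg‖ < ε / 2 := by
      rw [← dist_eq_norm]; exact hN n hn
    rw [dist_eq_norm, hsplit]
    calc ‖_ + _ + _‖ ≤ ‖(∫ x, (f x - P x) ∂(sigmaApprox g n))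
          + ((∫ x, P x ∂(sigmaApprox g n)) - ∫ x, P x ∂σg)‖ + ‖∫ x, (P x - f x) ∂σg‖ :=
          norm_add_le _ _
      _ ≤ (‖∫ x, (f x - P x) ∂(sigmaApprox g n)‖
          + ‖(∫ x, P x ∂(sigmaApprox g n)) - ∫ x, P x ∂σg‖) + ‖∫ x, (P x - f x) ∂σg‖ :=
          add_le_add_left (norm_add_le _ _) _
      _ < δ * C + ε / 2 + δ * D :=
          add_lt_add_of_lt_of_le (add_lt_add_of_le_of_lt b1 b2) b3
      _ ≤ ε := by
          have h1 : δ * (C + D) ≤ ε / 2 := by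
            rw [hδdef, div_mul_eq_mul_div, div_le_div_iff₀ (by positivity) (by norm_num)]
            nlinarith [hε.le, hC0, hD0]
          linarith
  -- real part
  intro φ
  have hφC : Continuous fun x : AddCircle (2 * Real.pi) => (φ x : ℂ) :=
    Complex.continuous_ofReal.comp φ.continuous
  have h := hcomplex ⟨fun x => (φ x : ℂ), hφC⟩
  have e : ∀ μ : Measure (AddCircle (2 * Real.pi)),
      ∫ x, ((⟨fun x => (φ x : ℂ), hφC⟩ : C(AddCircle (2 * Real.pi), ℂ)) x) ∂μ
        = ((∫ x, φ x ∂μ : ℝ) : ℂ) := by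
    intro μ
    exact integral_ofReal
  rw [e σg] at h
  have h2 := (Complex.continuous_re.tendsto _).comp h
  simp only [Function.comp_def, Complex.ofReal_re] at h2
  exact h2.congr fun n => by rw [e _, Complex.ofReal_re]
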